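/- arXiv:1602.00365 — 5 statements merged into one kernel-verified Lean document; each statement's English description precedes it below -/
import Mathlib

section
/- Let Φ_V(x) = e_{11} x e_{11}* + e_{21} x e_{21}* on M_2(ℂ). If Φ_V = λ Φ_1 + (1−λ) Φ_2 with Φ_1, Φ_2 unital completely positive maps on M_2(ℂ) and λ ∈ (0,1), then Φ_1 = Φ_2 = Φ_V. That is, Φ_V is an extreme point of the set of unital completely positive maps on M_2(ℂ). -/
open Matrix ComplexOrder

/-- The algebra of `n × n` complex matrices. -/
abbrev Mat (n : ℕ) := Matrix (Fin n) (Fin n) ℂ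

/-- The map `Ad v : x ↦ v x v*` as a linear map. -/
noncomputable def adL {n : ℕ} (v : Mat n) : Mat n →ₗ[ℂ] Mat n where
  toFun x := v * x * star v
  map_add' x y := by simp [Matrix.mul_add, Matrix.add_mul]
  map_smul' c x := by simp [Matrix.mul_smul, Matrix.smul_mul]

/-- A positive map sends positive semidefinite matrices to positive semidefinite matrices. -/
def IsPosMap (n : ℕ) (Φ : Mat n →ₗ[ℂ] Mat n) : Prop :=
  ∀ A : Mat n, A.PosSemidef → (Φ A).PosSemidef

/-- `Φ` is completely positive: `Φ ⊗ id_k` is positive for every `k`, where a block matrix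
in `M_n ⊗ M_k` is applied `Φ` blockwise. -/
def IsCompletelyPositive (n : ℕ) (Φ : Mat n →ₗ[ℂ] Mat n) : Prop :=
  ∀ k : ℕ, ∀ A : Matrix (Fin n × Fin k) (Fin n × Fin k) ℂ, A.PosSemidef →
    (Matrix.of fun p q : Fin n × Fin k =>
      (Φ (Matrix.of fun i j => A (i, p.2) (j, q.2))) p.1 q.1).PosSemidef

/-- Unital completely positive map. -/
def IsUCP (n : ℕ) (Φ : Mat n →ₗ[ℂ] Mat n) : Prop :=
  Φ 1 = 1 ∧ IsCompletelyPositive n Φ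

/-- A finite operational partition of unity: nonzero matrices with `∑ vᵢ vᵢ* = 1`. -/
def IsFOP {n m : ℕ} (v : Fin m → Mat n) : Prop :=
  (∀ i, v i ≠ 0) ∧ ∑ i, v i * star (v i) = 1

/-- The map `Φ_V(x) = e₁₁ x e₁₁* + e₂₁ x e₂₁*` on `M₂(ℂ)`. -/
noncomputable def PhiV : Mat 2 →ₗ[ℂ] Mat 2 :=
  adL (Matrix.single 0 0 1) + adL (Matrix.single 1 0 1)

/-! ### Auxiliary lemmas -/

lemma phiV_apply (x : Mat 2) : PhiV x = x 0 0 • 1 := by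
  ext i j
  fin_cases i <;> fin_cases j <;>
    simp [PhiV, adL, Matrix.mul_apply, Fin.sum_univ_two, Matrix.single,
      Matrix.one_apply, star_eq_conjTranspose, Matrix.conjTranspose_apply]

lemma e_sum : (Matrix.single 0 0 1 : Mat 2) + Matrix.single 1 1 1 = 1 := by
  ext i j; fin_cases i <;> fin_cases j <;> simp [Matrix.single, Matrix.one_apply]

lemma e22_psd : (Matrix.single 1 1 1 : Mat 2).PosSemidef := by
  have : (Matrix.single 1 1 1 : Mat 2) = Matrix.diagonal (Pi.single 1 1) := by
    ext i j; fin_cases i <;> fin_cases j <;> simp [Matrix.single, Matrix.diagonal]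
  rw [this]
  exact Matrix.PosSemidef.diagonal (by intro i; fin_cases i <;> simp [Pi.single_apply])

lemma scalar_zero {a b : ℂ} (ha : 0 ≤ a) (hb : 0 ≤ b) {l : ℝ} (hl : l ∈ Set.Ioo (0:ℝ) 1)
    (h : (l:ℂ) * a + ((1 - l : ℝ):ℂ) * b = 0) : a = 0 ∧ b = 0 := by
  have hla : 0 ≤ (l:ℂ) * a := mul_nonneg (by exact_mod_cast le_of_lt hl.1) ha
  have hlb : 0 ≤ ((1 - l : ℝ):ℂ) * b :=
    mul_nonneg (by exact_mod_cast (by linarith [hl.2] : (0:ℝ) ≤ 1 - l)) hb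
  have h1 : (l:ℂ) * a = 0 ∧ ((1 - l : ℝ):ℂ) * b = 0 :=
    (add_eq_zero_iff_of_nonneg hla hlb).mp h
  constructor
  · rcases mul_eq_zero.mp h1.1 with h' | h'
    · exact absurd h' (by exact_mod_cast ne_of_gt hl.1)
    · exact h'
  · rcases mul_eq_zero.mp h1.2 with h' | h'
    · exfalso
      have : (1:ℝ) - l = 0 := by exact_mod_cast h'
      linarith [hl.2]
    · exact h'

/-- A completely positive map is positive. -/
lemma cp_pos {n : ℕ} {Φ : Mat n →ₗ[ℂ] Mat n} (hΦ : IsCompletelyPositive n Φ) :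
    IsPosMap n Φ := by
  intro A hA
  have h1 := hΦ 1 (A.submatrix Prod.fst Prod.fst) (hA.submatrix _)
  have key : ∀ p q : Fin n × Fin 1,
      (Matrix.of fun i j => (A.submatrix Prod.fst Prod.fst) (i, p.2) (j, q.2)) = A := by
    intro p q; ext i j; simp [Matrix.submatrix]
  have h2 : Φ A = (Matrix.of fun p q : Fin n × Fin 1 =>
      (Φ (Matrix.of fun i j => (A.submatrix Prod.fst Prod.fst) (i, p.2) (j, q.2))) p.1 q.1).submatrix
      (fun i => (i, 0)) (fun j => (j, 0)) := by
    ext i j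
    simp only [Matrix.submatrix_apply, Matrix.of_apply, key]
    rfl
  rw [h2]
  exact h1.submatrix _

/-- Convex combination of PSD matrices vanishing forces each to vanish. -/
lemma convex_psd_zero {n : ℕ} {A B : Mat n} (hA : A.PosSemidef) (hB : B.PosSemidef)
    {l : ℝ} (hl : l ∈ Set.Ioo (0:ℝ) 1)
    (h : (l:ℂ) • A + ((1 - l : ℝ):ℂ) • B = 0) : A = 0 ∧ B = 0 := by
  have key : ∀ x : Fin n → ℂ, star x ⬝ᵥ A *ᵥ x = 0 ∧ star x ⬝ᵥ B *ᵥ x = 0 := by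
    intro x
    have h0 : (l:ℂ) * (star x ⬝ᵥ A *ᵥ x) + ((1 - l : ℝ):ℂ) * (star x ⬝ᵥ B *ᵥ x) = 0 := by
      have := congrArg (fun M : Mat n => star x ⬝ᵥ M *ᵥ x) h
      simpa [Matrix.add_mulVec, Matrix.smul_mulVec, dotProduct_add,
        dotProduct_smul, smul_eq_mul] using this
    exact scalar_zero (hA.dotProduct_mulVec_nonneg x) (hB.dotProduct_mulVec_nonneg x) hl h0
  have hAz : A = 0 := by
    ext i j
    have := hA.dotProduct_mulVec_zero_iff (Pi.single j 1) |>.mp (key (Pi.single j 1)).1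
    have := congrFun this i
    simpa [Matrix.mulVec_single] using this
  have hBz : B = 0 := by
    ext i j
    have := hB.dotProduct_mulVec_zero_iff (Pi.single j 1) |>.mp (key (Pi.single j 1)).2
    have := congrFun this i
    simpa [Matrix.mulVec_single] using this
  exact ⟨hAz, hBz⟩

/-- The PSD witness matrix for Kadison–Schwarz at `x = e₂₁`:
`[[e₂₂, e₂₁],[e₁₂, 1]]` in block form. -/
noncomputable def bigC : Matrix (Fin 2 × Fin 2) (Fin 2 × Fin 2) ℂ :=
  Matrix.of fun p q =>
    (if q = ((0 : Fin 2), (0 : Fin 2)) then (if p = (1, 0) ∨ p = (0, 1) then 1 else 0) else 0) +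
    (if q = ((0 : Fin 2), (1 : Fin 2)) then (if p = (1, 1) then 1 else 0) else 0)

noncomputable def bigA : Matrix (Fin 2 × Fin 2) (Fin 2 × Fin 2) ℂ := bigC * bigCᴴ

lemma bigA_psd : bigA.PosSemidef := Matrix.posSemidef_self_mul_conjTranspose bigC

lemma bigA_apply (p q : Fin 2 × Fin 2) :
    bigA p q =
      (if p = ((1 : Fin 2), (0 : Fin 2)) ∨ p = (0, 1) then 1 else 0) *
        (if q = ((1 : Fin 2), (0 : Fin 2)) ∨ q = (0, 1) then 1 else 0) +
      (if p = ((1 : Fin 2), (1 : Fin 2)) then 1 else 0) *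
        (if q = ((1 : Fin 2), (1 : Fin 2)) then 1 else 0) := by
  rcases p with ⟨i, s⟩; rcases q with ⟨j, t⟩
  fin_cases i <;> fin_cases s <;> fin_cases j <;> fin_cases t <;>
    simp [bigA, bigC, Matrix.mul_apply, Fintype.sum_prod_type, Fin.sum_univ_two,
      Matrix.conjTranspose_apply, Prod.ext_iff]

/-- Key lemma: a UCP map killing `e₂₂` is `Φ_V`. -/
lemma ucp_eq_phiV {Φ : Mat 2 →ₗ[ℂ] Mat 2} (hΦ : IsUCP 2 Φ)
    (h22 : Φ (Matrix.single 1 1 1) = 0) : Φ = PhiV := by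
  obtain ⟨hu, hcp⟩ := hΦ
  -- Φ(e₁₁) = 1
  have h11 : Φ (Matrix.single 0 0 1) = 1 := by
    have := congrArg Φ e_sum
    rw [map_add, h22, add_zero] at this
    rw [this, hu]
  -- the blockwise image of bigA
  set P : Matrix (Fin 2 × Fin 2) (Fin 2 × Fin 2) ℂ :=
    Matrix.of fun p q : Fin 2 × Fin 2 =>
      (Φ (Matrix.of fun i j => bigA (i, p.2) (j, q.2))) p.1 q.1 with hP
  have hPsd : P.PosSemidef := hcp 2 bigA bigA_psd
  -- compute the blocks of bigA
  have block00 : ∀ i : Fin 2, (Matrix.of fun a b => bigA (a, (0 : Fin 2)) (b, (0 : Fin 2)))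
      = (Matrix.single 1 1 1 : Mat 2) := by
    intro _
    ext a b
    fin_cases a <;> fin_cases b <;> simp [bigA_apply, Matrix.single, Prod.ext_iff]
  have block10 : (Matrix.of fun a b => bigA (a, (1 : Fin 2)) (b, (0 : Fin 2)))
      = (Matrix.single 0 1 1 : Mat 2) := by
    ext a b
    fin_cases a <;> fin_cases b <;> simp [bigA_apply, Matrix.single, Prod.ext_iff]
  have block01 : (Matrix.of fun a b => bigA (a, (0 : Fin 2)) (b, (1 : Fin 2)))
      = (Matrix.single 1 0 1 : Mat 2) := by
    ext a b
    fin_cases a <;> fin_cases b <;> simp [bigA_apply, Matrix.single, Prod.ext_iff]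
  -- diagonal entries of P in the (0,0) block are zero
  have hPdiag : ∀ i : Fin 2, P (i, 0) (i, 0) = 0 := by
    intro i
    have : P (i, 0) (i, 0) = (Φ (Matrix.single 1 1 1)) i i := by
      simp only [hP, Matrix.of_apply]
      rw [block00 i]
    rw [this, h22]
    simp
  -- columns (i,0) of P vanish
  have hPcol : ∀ i : Fin 2, ∀ r : Fin 2 × Fin 2, P r (i, 0) = 0 := by
    intro i r
    have hq : star (Pi.single (i, (0 : Fin 2)) (1:ℂ)) ⬝ᵥ P *ᵥ Pi.single (i, 0) 1 = 0 := by
      simp [Matrix.mulVec_single, dotProduct, Pi.single_apply, Finset.sum_ite_eq',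
        hPdiag i]
    have := hPsd.dotProduct_mulVec_zero_iff (Pi.single (i, 0) 1) |>.mp hq
    have := congrFun this r
    simpa [Matrix.mulVec_single] using this
  -- Φ(e₁₂) = 0
  have h12 : Φ (Matrix.single 0 1 1) = 0 := by
    ext a b
    have : P (a, 1) (b, 0) = (Φ (Matrix.single 0 1 1)) a b := by
      simp only [hP, Matrix.of_apply]
      rw [block10]
    rw [← this, hPcol b (a, 1)]
    simp
  -- Φ(e₂₁) = 0, using hermitian-ness of P
  have h21 : Φ (Matrix.single 1 0 1) = 0 := by
    ext a b
    have h1 : P (a, 0) (b, 1) = (Φ (Matrix.single 1 0 1)) a b := by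
      simp only [hP, Matrix.of_apply]
      rw [block01]
    have h2 : P (a, 0) (b, 1) = star (P (b, 1) (a, 0)) := by
      exact (hPsd.isHermitian.apply (a, 0) (b, 1)).symm
    rw [← h1, h2, hPcol a (b, 1)]
    simp
  -- now determine Φ on every matrix
  apply LinearMap.ext
  intro x
  have hx : x = x 0 0 • Matrix.single 0 0 1 + x 0 1 • Matrix.single 0 1 1
      + x 1 0 • Matrix.single 1 0 1 + x 1 1 • Matrix.single 1 1 1 := by
    ext i j
    fin_cases i <;> fin_cases j <;> simp [Matrix.single]
  rw [phiV_apply]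
  calc Φ x = Φ (x 0 0 • Matrix.single 0 0 1 + x 0 1 • Matrix.single 0 1 1
      + x 1 0 • Matrix.single 1 0 1 + x 1 1 • Matrix.single 1 1 1) := by rw [← hx]
    _ = x 0 0 • 1 := by
        rw [map_add, map_add, map_add, LinearMap.map_smul, LinearMap.map_smul,
          LinearMap.map_smul, LinearMap.map_smul, h11, h12, h21, h22]
        simp

theorem phiV_extreme (Φ₁ Φ₂ : Mat 2 →ₗ[ℂ] Mat 2)
    (h₁ : IsUCP 2 Φ₁) (h₂ : IsUCP 2 Φ₂) (l : ℝ) (hl : l ∈ Set.Ioo (0 : ℝ) 1)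
    (h : PhiV = ((l : ℂ) • Φ₁) + (((1 - l : ℝ) : ℂ) • Φ₂)) :
    Φ₁ = PhiV ∧ Φ₂ = PhiV := by
  have he : (l:ℂ) • Φ₁ (Matrix.single 1 1 1)
      + ((1 - l : ℝ):ℂ) • Φ₂ (Matrix.single 1 1 1) = 0 := by
    have := congrFun (congrArg DFunLike.coe h) (Matrix.single 1 1 1)
    simp only [LinearMap.add_apply, LinearMap.smul_apply] at this
    rw [← this, phiV_apply]
    simp [Matrix.single]
  have hA := cp_pos h₁.2 _ e22_psd
  have hB := cp_pos h₂.2 _ e22_psd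
  obtain ⟨hz1, hz2⟩ := convex_psd_zero hA hB hl he
  exact ⟨ucp_eq_phiV h₁ hz1, ucp_eq_phiV h₂ hz2⟩
end

section
/- Let Φ_V(x) = e_{11} x e_{11}* + e_{21} x e_{21}* on M_2(ℂ). With a = e_{11}, b = e_{22}, u = e_{12} + e_{21}, one has a a* + b b* = 1, u is unitary, and Φ_V(x) = a x a* + b (u x u*) b* for all x. Hence Φ_V is not an operational extreme point of the set of unital completely positive maps on M_2(ℂ), although it is an extreme point in the usual sense. -/
open Matrix ComplexOrder

/-- Operational extreme point of a set `S` of linear maps. -/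
def IsOpExtreme (n : ℕ) (S : Set (Mat n →ₗ[ℂ] Mat n)) (Φ : Mat n →ₗ[ℂ] Mat n) : Prop :=
  Φ ∈ S ∧ ∀ (a b : Mat n) (Φ₁ Φ₂ : Mat n →ₗ[ℂ] Mat n),
    Φ₁ ∈ S → Φ₂ ∈ S → a ≠ 0 → b ≠ 0 → a * star a + b * star b = 1 →
    Φ = (adL a).comp Φ₁ + (adL b).comp Φ₂ →
    ∃ l : ℝ, l ∈ Set.Ioo (0 : ℝ) 1 ∧
      a * star a = (l : ℂ) • (1 : Mat n) ∧
      b * star b = ((1 - l : ℝ) : ℂ) • (1 : Mat n) ∧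
      ((l⁻¹ : ℝ) : ℂ) • (adL a).comp Φ₁ = Φ ∧
      (((1 - l)⁻¹ : ℝ) : ℂ) • (adL b).comp Φ₂ = Φ

lemma cp_adL {n : ℕ} (v : Mat n) : IsCompletelyPositive n (adL v) := by
  intro k A hA
  set V : Matrix (Fin n × Fin k) (Fin n × Fin k) ℂ :=
    Matrix.of fun p q => v p.1 q.1 * (if p.2 = q.2 then 1 else 0) with hV
  have : (Matrix.of fun p q : Fin n × Fin k =>
      ((adL v) (Matrix.of fun i j => A (i, p.2) (j, q.2))) p.1 q.1) = V * A * Vᴴ := by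
    ext p q
    simp only [Matrix.of_apply, adL, LinearMap.coe_mk, AddHom.coe_mk, Matrix.mul_apply,
      Matrix.conjTranspose_apply, Matrix.star_apply, hV, star_mul', Fintype.sum_prod_type]
    simp [Finset.mul_sum, Finset.sum_mul, apply_ite, mul_comm, mul_assoc, mul_left_comm]
  rw [this]
  exact hA.mul_mul_conjTranspose_same V

lemma cp_id' {n : ℕ} : IsCompletelyPositive n LinearMap.id := by
  intro k A hA
  have : (Matrix.of fun p q : Fin n × Fin k =>
      ((LinearMap.id : Mat n →ₗ[ℂ] Mat n) (Matrix.of fun i j => A (i, p.2) (j, q.2))) p.1 q.1)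
      = A := by ext p q; simp
  rw [this]; exact hA

theorem phiV_not_opExtreme :
    (Matrix.single 0 0 1 * star (Matrix.single 0 0 (1 : ℂ)) +
      Matrix.single 1 1 1 * star (Matrix.single 1 1 (1 : ℂ)) = (1 : Mat 2)) ∧
    ((Matrix.single 0 1 1 + Matrix.single 1 0 (1 : ℂ)) *
        star (Matrix.single 0 1 1 + Matrix.single 1 0 (1 : ℂ)) = (1 : Mat 2)) ∧
    (star (Matrix.single 0 1 1 + Matrix.single 1 0 (1 : ℂ)) *
        (Matrix.single 0 1 1 + Matrix.single 1 0 (1 : ℂ)) = (1 : Mat 2)) ∧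
    (∀ x : Mat 2,
      PhiV x =
        Matrix.single 0 0 1 * x * star (Matrix.single 0 0 (1 : ℂ)) +
        Matrix.single 1 1 1 *
          ((Matrix.single 0 1 1 + Matrix.single 1 0 (1 : ℂ)) * x *
            star (Matrix.single 0 1 1 + Matrix.single 1 0 (1 : ℂ))) *
          star (Matrix.single 1 1 (1 : ℂ))) ∧
    ¬ IsOpExtreme 2 {Φ | IsUCP 2 Φ} PhiV := by
  set a : Mat 2 := Matrix.single 0 0 (1 : ℂ) with ha
  set b : Mat 2 := Matrix.single 1 1 (1 : ℂ) with hb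
  set u : Mat 2 := Matrix.single 0 1 1 + Matrix.single 1 0 (1 : ℂ) with hu
  have h1 : a * star a + b * star b = 1 := by
    ext i j
    fin_cases i <;> fin_cases j <;>
      simp [ha, hb, Matrix.mul_apply, Matrix.one_apply, Fin.sum_univ_two, Matrix.single,
        Matrix.star_apply, Matrix.conjTranspose_apply]
  have huu : u * star u = 1 := by
    ext i j
    fin_cases i <;> fin_cases j <;>
      simp [hu, Matrix.mul_apply, Matrix.one_apply, Fin.sum_univ_two, Matrix.single,
        Matrix.star_apply, Matrix.conjTranspose_apply]
  have huu' : star u * u = 1 := by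
    ext i j
    fin_cases i <;> fin_cases j <;>
      simp [hu, Matrix.mul_apply, Matrix.one_apply, Fin.sum_univ_two, Matrix.single,
        Matrix.star_apply, Matrix.conjTranspose_apply]
  have hbu : b * u = Matrix.single 1 0 1 := by
    ext i j
    fin_cases i <;> fin_cases j <;>
      simp [hb, hu, Matrix.mul_apply, Fin.sum_univ_two, Matrix.single]
  have h4 : ∀ x : Mat 2, PhiV x = a * x * star a + b * (u * x * star u) * star b := by
    intro x
    have hassoc : b * (u * x * star u) * star b = (b * u) * x * star (b * u) := by
      rw [StarMul.star_mul]; noncomm_ring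
    rw [hassoc, hbu]
    simp [PhiV, adL, ha]
  refine ⟨h1, huu, huu', h4, ?_⟩
  rintro ⟨-, h⟩
  have hΦ1 : (LinearMap.id : Mat 2 →ₗ[ℂ] Mat 2) ∈ {Φ | IsUCP 2 Φ} := ⟨rfl, cp_id'⟩
  have hΦ2 : adL u ∈ {Φ | IsUCP 2 Φ} := by
    refine ⟨?_, cp_adL u⟩
    show u * 1 * star u = 1
    rw [mul_one, huu]
  have hane : a ≠ 0 := by
    intro h0
    have := congrFun (congrFun h0 0) 0
    simp [ha, Matrix.single] at this
  have hbne : b ≠ 0 := by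
    intro h0
    have := congrFun (congrFun h0 1) 1
    simp [hb, Matrix.single] at this
  have hdecomp : PhiV = (adL a).comp LinearMap.id + (adL b).comp (adL u) := by
    apply LinearMap.ext; intro x
    simp only [LinearMap.add_apply, LinearMap.comp_apply, LinearMap.id_coe, id_eq]
    rw [h4 x]
    simp [adL]
  obtain ⟨l, hl, -, hbb, -, -⟩ := h a b _ _ hΦ1 hΦ2 hane hbne h1 hdecomp
  have h00 := congrFun (congrFun hbb 0) 0
  simp [hb, Matrix.mul_apply, Fin.sum_univ_two, Matrix.single, Matrix.one_apply,
    Matrix.star_apply, Matrix.conjTranspose_apply, Matrix.smul_apply] at h00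
  have : (0 : ℝ) = 1 - l := by exact_mod_cast h00
  linarith [hl.2]
end

section
/- For any unitary u ∈ M_n(ℂ), the map Ad u (x) = u x u* is extremal among positive maps: if Ψ is a positive linear map on M_n(ℂ) such that Ad u − Ψ is positive, then Ψ = λ · Ad u for some λ ∈ [0,1]. -/
open Matrix ComplexOrder

noncomputable def P {n : ℕ} (v : Fin n → ℂ) : Mat n := vecMulVec v (star v)

lemma P_mulVec {n : ℕ} (v x : Fin n → ℂ) : (P v) *ᵥ x = (star v ⬝ᵥ x) • v := by
  funext i
  simp [P, mulVec, dotProduct, vecMulVec_apply, Finset.mul_sum, mul_comm, mul_left_comm]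

lemma star_dot_eq_conj {n : ℕ} (v x : Fin n → ℂ) :
    star x ⬝ᵥ v = starRingEnd ℂ (star v ⬝ᵥ x) := by
  simp [dotProduct, Finset.sum_comm, map_sum, mul_comm]

lemma P_posSemidef {n : ℕ} (v : Fin n → ℂ) : (P v).PosSemidef := by
  refine PosSemidef.of_dotProduct_mulVec_nonneg ?_ ?_
  · ext i j; simp [P, IsHermitian, conjTranspose_apply, vecMulVec_apply, mul_comm]
  · intro x
    rw [P_mulVec, dotProduct_smul, smul_eq_mul, star_dot_eq_conj]
    rw [mul_comm, Complex.mul_conj]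
    exact Complex.zero_le_real.2 (Complex.normSq_nonneg _)

lemma psd_and_neg_psd_eq_zero {n : ℕ} (A : Mat n) (hA : A.PosSemidef)
    (hA' : (-A).PosSemidef) : A = 0 := by
  have hker : ∀ w, A *ᵥ w = 0 := by
    intro w
    refine (hA.dotProduct_mulVec_zero_iff w).1 (le_antisymm ?_ (hA.dotProduct_mulVec_nonneg w))
    have h2 := hA'.dotProduct_mulVec_nonneg w
    rw [neg_mulVec, dotProduct_neg] at h2
    exact neg_nonneg.1 h2
  ext i j
  have := congrFun (hker (Pi.single j 1)) i
  simpa using this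

lemma psd_le_rankOne {n : ℕ} (v : Fin n → ℂ) (A : Mat n) (hA : A.PosSemidef)
    (hle : (P v - A).PosSemidef) : ∃ c : ℂ, A = c • P v := by
  by_cases hv : v = 0
  · refine ⟨0, ?_⟩
    subst hv
    have hP0 : P (0 : Fin n → ℂ) = 0 := by
      ext i j; simp [P, vecMulVec_apply]
    rw [hP0, sub_eq_add_neg, zero_add] at hle
    rw [psd_and_neg_psd_eq_zero A hA hle, zero_smul]
  · have hker : ∀ w, star v ⬝ᵥ w = 0 → A *ᵥ w = 0 := by
      intro w hw
      refine (hA.dotProduct_mulVec_zero_iff w).1 (le_antisymm ?_ (hA.dotProduct_mulVec_nonneg w))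
      have h2 := hle.dotProduct_mulVec_nonneg w
      rw [sub_mulVec, dotProduct_sub, P_mulVec, hw, zero_smul, dotProduct_zero, zero_sub] at h2
      exact neg_nonneg.1 h2
    set t : ℂ := star v ⬝ᵥ v with ht
    have ht0 : t ≠ 0 := fun h => hv (dotProduct_star_self_eq_zero.1 h)
    have hAx : ∀ x, A *ᵥ x = ((star v ⬝ᵥ x) / t) • (A *ᵥ v) := by
      intro x
      have hw : star v ⬝ᵥ (x - ((star v ⬝ᵥ x) / t) • v) = 0 := by
        rw [dotProduct_sub, dotProduct_smul, smul_eq_mul, ← ht, div_mul_cancel₀ _ ht0, sub_self]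
      have := hker _ hw
      rw [mulVec_sub, mulVec_smul, sub_eq_zero] at this
      exact this
    set c' : ℂ := (star v ⬝ᵥ A *ᵥ v) / t with hc'
    have hAv : A *ᵥ v = c' • v := by
      set z : Fin n → ℂ := A *ᵥ v - c' • v with hz
      have hzv : star v ⬝ᵥ z = 0 := by
        rw [hz, dotProduct_sub, dotProduct_smul, smul_eq_mul, ← ht, div_mul_cancel₀ _ ht0, sub_self]
      have hAz : A *ᵥ z = 0 := hker z hzv
      have hzA : star z ᵥ* A = 0 := by
        have := star_mulVec A z
        rw [hAz, star_zero, hA.1] at this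
        exact this.symm
      have hzz : star z ⬝ᵥ z = 0 := by
        have h1 : star z ⬝ᵥ (A *ᵥ v) = 0 := by
          rw [dotProduct_mulVec, hzA, zero_dotProduct]
        have h2 : star z ⬝ᵥ v = 0 := by
          rw [star_dot_eq_conj, hzv, map_zero]
        rw [hz] at h1 h2 ⊢
        rw [dotProduct_sub, h1, dotProduct_smul, h2, smul_eq_mul, mul_zero, zero_sub, neg_zero]
      have := dotProduct_star_self_eq_zero.1 hzz
      rw [hz, sub_eq_zero] at this
      exact this
    refine ⟨c' / t, ?_⟩
    ext i j
    have h1 := congrFun (hAx (Pi.single j 1)) i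
    simp only [mulVec_single, mul_one, MulOpposite.op_one, one_smul, col_apply] at h1
    have h2 : star v ⬝ᵥ Pi.single j 1 = starRingEnd ℂ (v j) := by
      simp [dotProduct, Pi.single_apply]
    rw [hAv] at h1
    rw [h1, h2]
    simp [P, vecMulVec_apply, Pi.smul_apply, smul_eq_mul]
    ring

lemma quad_eval {n : ℕ} (x z : Fin n → ℂ) :
    star z ⬝ᵥ (P x) *ᵥ z = (star x ⬝ᵥ z) * (star z ⬝ᵥ x) := by
  rw [P_mulVec, dotProduct_smul, smul_eq_mul]

lemma P_ne_zero {n : ℕ} (v : Fin n → ℂ) (hv : v ≠ 0) : P v ≠ 0 := by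
  intro h
  apply hv
  funext i
  have := congrFun (congrFun h i) i
  simp only [P, vecMulVec_apply, Pi.star_apply, Matrix.zero_apply] at this
  have := mul_eq_zero.1 this
  rcases this with h1 | h1
  · exact h1
  · simpa using congrArg star h1

lemma P_neg {n : ℕ} (v : Fin n → ℂ) : P (-v) = P v := by
  ext i j; simp [P, vecMulVec_apply]

lemma P_smul {n : ℕ} (a : ℂ) (v : Fin n → ℂ) : P (a • v) = (a * starRingEnd ℂ a) • P v := by
  ext i j
  simp [P, vecMulVec_apply, Complex.star_def]
  ring

lemma P_add_add_P_sub {n : ℕ} (v w : Fin n → ℂ) :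
    P (v + w) + P (v - w) = (2:ℂ) • P v + (2:ℂ) • P w := by
  ext i j
  simp [P, vecMulVec_apply, Complex.star_def, map_add, map_sub]
  ring

lemma star_single_one {n : ℕ} (j : Fin n) :
    star (Pi.single j (1:ℂ)) = (Pi.single j 1 : Fin n → ℂ) := by
  funext k
  simp [Pi.star_apply, Pi.single_apply, apply_ite]

lemma four_smul_vecMulVec {n : ℕ} (a b : Fin n → ℂ) :
    (4:ℂ) • vecMulVec a (star b) =
      P (a + b) - P (a - b) + Complex.I • P (a + Complex.I • b)
        - Complex.I • P (a - Complex.I • b) := by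
  ext i j
  simp only [P, vecMulVec_apply, Matrix.smul_apply, Matrix.add_apply, Matrix.sub_apply,
    Pi.star_apply, Pi.add_apply, Pi.sub_apply, Pi.smul_apply, smul_eq_mul, Complex.star_def,
    map_add, map_sub, _root_.map_mul, Complex.conj_I]
  ring_nf
  simp only [Complex.I_sq]
  ring

lemma core {n : ℕ} (hn : 0 < n) (Φ : Mat n →ₗ[ℂ] Mat n)
    (hΦ : ∀ A : Mat n, A.PosSemidef → (Φ A).PosSemidef)
    (hid : ∀ A : Mat n, A.PosSemidef → (A - Φ A).PosSemidef) :
    ∃ l : ℝ, l ∈ Set.Icc (0:ℝ) 1 ∧ Φ = (l : ℂ) • (LinearMap.id : Mat n →ₗ[ℂ] Mat n) := by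
  have hex : ∀ v : Fin n → ℂ, ∃ c : ℂ, Φ (P v) = c • P v := fun v =>
    psd_le_rankOne v _ (hΦ _ (P_posSemidef v)) (hid _ (P_posSemidef v))
  choose c hc using hex
  have uniq : ∀ (v : Fin n → ℂ) (a : ℂ), v ≠ 0 → Φ (P v) = a • P v → a = c v := by
    intro v a hv h
    have h2 : (a - c v) • P v = 0 := by
      rw [sub_smul, ← h, ← hc v, sub_self]
    rcases smul_eq_zero.1 h2 with h3 | h3
    · exact sub_eq_zero.1 h3
    · exact absurd h3 (P_ne_zero v hv)
  -- quadratic form evaluation of Φ(P x)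
  have quadΦ : ∀ x z : Fin n → ℂ, star z ⬝ᵥ (Φ (P x)) *ᵥ z = c x * ((star x ⬝ᵥ z) * (star z ⬝ᵥ x)) := by
    intro x z
    rw [hc x, smul_mulVec, dotProduct_smul, smul_eq_mul, quad_eval]
  -- key relation from polarization identity
  have key : ∀ v w z : Fin n → ℂ, star w ⬝ᵥ z = 0 → star z ⬝ᵥ w = 0 →
      (c (v + w) + c (v - w)) * ((star v ⬝ᵥ z) * (star z ⬝ᵥ v)) =
        2 * c v * ((star v ⬝ᵥ z) * (star z ⬝ᵥ v)) := by
    intro v w z hwz hzw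
    have hM : Φ (P (v + w)) + Φ (P (v - w)) = (2:ℂ) • Φ (P v) + (2:ℂ) • Φ (P w) := by
      rw [← _root_.map_smul, ← _root_.map_smul, ← map_add, ← map_add, P_add_add_P_sub]
    have := congrArg (fun M : Mat n => star z ⬝ᵥ M *ᵥ z) hM
    simp only [add_mulVec, dotProduct_add, smul_mulVec, dotProduct_smul, smul_eq_mul,
      quadΦ, star_add, star_sub, add_dotProduct, sub_dotProduct, dotProduct_sub,
      hwz, hzw, add_zero, sub_zero, zero_add, zero_sub, mul_zero, zero_mul] at this
    linear_combination this
  -- scaling invariance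
  have hscale : ∀ (v : Fin n → ℂ) (a : ℂ), v ≠ 0 → a ≠ 0 → c (a • v) = c v := by
    intro v a hv ha
    have hav : a • v ≠ 0 := smul_ne_zero ha hv
    refine (uniq (a • v) (c v) hav ?_).symm
    rw [P_smul, _root_.map_smul, hc v, smul_comm]
  -- equal on pairs with no dependence
  have hGS : ∀ v w : Fin n → ℂ, v ≠ 0 → (¬ ∃ a : ℂ, w = a • v) →
      c (v + w) + c (v - w) = 2 * c v := by
    intro v w hv hdep
    have hw0 : w ≠ 0 := fun h => hdep ⟨0, by rw [h, zero_smul]⟩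
    set q : ℂ := (star w ⬝ᵥ v) / (star w ⬝ᵥ w) with hq
    set z : Fin n → ℂ := v - q • w with hzdef
    have hww : star w ⬝ᵥ w ≠ 0 := fun h => hw0 (dotProduct_star_self_eq_zero.1 h)
    have hwz : star w ⬝ᵥ z = 0 := by
      rw [hzdef, dotProduct_sub, dotProduct_smul, smul_eq_mul, hq,
        div_mul_cancel₀ _ hww, sub_self]
    have hzw : star z ⬝ᵥ w = 0 := by
      rw [star_dot_eq_conj, hwz, map_zero]
    have hz0 : z ≠ 0 := by
      intro h
      rw [hzdef, sub_eq_zero] at h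
      have hq0 : q ≠ 0 := by
        intro h0; rw [h0, zero_smul] at h; exact hv h
      exact hdep ⟨q⁻¹, by rw [h, smul_smul, inv_mul_cancel₀ hq0, one_smul]⟩
    have hzv : star z ⬝ᵥ v = star z ⬝ᵥ z := by
      conv_rhs => rw [hzdef]
      rw [dotProduct_sub, dotProduct_smul, hzw, smul_eq_mul, mul_zero, sub_zero]
    have hzz : star z ⬝ᵥ z ≠ 0 := fun h => hz0 (dotProduct_star_self_eq_zero.1 h)
    have hne : (star v ⬝ᵥ z) * (star z ⬝ᵥ v) ≠ 0 := by
      apply mul_ne_zero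
      · rw [star_dot_eq_conj, hzv]
        simpa using hzz
      · rw [hzv]; exact hzz
    exact mul_right_cancel₀ hne (key v w z hwz hzw)
  -- constancy
  have hconst : ∀ v w : Fin n → ℂ, v ≠ 0 → w ≠ 0 → c v = c w := by
    intro v w hv hw
    by_cases hdep : ∃ a : ℂ, w = a • v
    · obtain ⟨a, rfl⟩ := hdep
      have ha : a ≠ 0 := by rintro rfl; rw [zero_smul] at hw; exact hw rfl
      exact (hscale v a hv ha).symm
    · have hdep' : ¬ ∃ a : ℂ, v = a • w := by
        rintro ⟨a, rfl⟩
        have ha : a ≠ 0 := by rintro rfl; rw [zero_smul] at hv; exact hv rfl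
        exact hdep ⟨a⁻¹, by rw [smul_smul, inv_mul_cancel₀ ha, one_smul]⟩
      have h1 := hGS v w hv hdep
      have h2 := hGS w v hw hdep'
      have hwv : w - v ≠ 0 := by
        intro h
        exact hdep ⟨1, by rw [one_smul]; exact sub_eq_zero.1 h⟩
      have hcsub : c (w - v) = c (v - w) := by
        refine (uniq (w - v) (c (v - w)) hwv ?_).symm
        have : P (w - v) = P (v - w) := by rw [← P_neg (v - w), neg_sub]
        rw [this, hc]
      rw [add_comm w v, hcsub] at h2
      have := h1.symm.trans h2
      linear_combination this / 2
  -- the constant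
  set v₀ : Fin n → ℂ := fun _ => 1 with hv₀def
  have hv₀ : v₀ ≠ 0 := by
    intro h
    have := congrFun h ⟨0, hn⟩
    simp [hv₀def] at this
  have hT : star v₀ ⬝ᵥ v₀ = (n:ℂ) := by simp [dotProduct, hv₀def]
  have h0 := (hΦ (P v₀) (P_posSemidef v₀)).dotProduct_mulVec_nonneg v₀
  rw [quadΦ, hT] at h0
  have h1 := (hid (P v₀) (P_posSemidef v₀)).dotProduct_mulVec_nonneg v₀
  rw [sub_mulVec, dotProduct_sub, quad_eval, quadΦ, hT] at h1
  rw [Complex.le_def] at h0 h1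
  obtain ⟨h0re, h0im⟩ := h0
  obtain ⟨h1re, h1im⟩ := h1
  simp only [Complex.mul_re, Complex.mul_im, Complex.sub_re, Complex.sub_im,
    Complex.natCast_re, Complex.natCast_im, Complex.zero_re, Complex.zero_im,
    mul_zero, zero_mul, add_zero, zero_add, sub_zero] at h0re h0im h1re h1im
  have hN : (0:ℝ) < (n:ℝ) := by exact_mod_cast hn
  have hnn : (0:ℝ) < (n:ℝ) * (n:ℝ) := mul_pos hN hN
  have him0 : (c v₀).im = 0 := (mul_eq_zero.1 h0im.symm).resolve_right hnn.ne'
  have hre0 : 0 ≤ (c v₀).re := nonneg_of_mul_nonneg_right (by linarith [h0re] : 0 ≤ (↑n * ↑n) * (c v₀).re) hnn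
  have hre1 : (c v₀).re ≤ 1 := by nlinarith [h1re, hnn]
  refine ⟨(c v₀).re, ⟨hre0, hre1⟩, ?_⟩
  have hl : (((c v₀).re : ℝ) : ℂ) = c v₀ := by
    apply Complex.ext <;> simp [him0]
  have hPall : ∀ v : Fin n → ℂ, Φ (P v) = (((c v₀).re:ℝ):ℂ) • P v := by
    intro v
    by_cases hv : v = 0
    · subst hv
      have hP0 : P (0 : Fin n → ℂ) = 0 := by ext i j; simp [P, vecMulVec_apply]
      rw [hP0]; simp
    · rw [hc v, hconst v v₀ hv hv₀, hl]
  have hrank : ∀ a b : Fin n → ℂ,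
      Φ (vecMulVec a (star b)) = (((c v₀).re:ℝ):ℂ) • vecMulVec a (star b) := by
    intro a b
    have h4 := congrArg Φ (four_smul_vecMulVec a b)
    rw [_root_.map_smul, map_sub, map_add, map_sub, _root_.map_smul, _root_.map_smul,
      hPall, hPall, hPall, hPall] at h4
    apply smul_right_injective (Mat n) (by norm_num : (4:ℂ) ≠ 0)
    show (4:ℂ) • Φ (vecMulVec a (star b))
      = (4:ℂ) • ((((c v₀).re:ℝ):ℂ) • vecMulVec a (star b))
    rw [h4, smul_comm ((4:ℂ)) ((((c v₀).re:ℝ):ℂ)), four_smul_vecMulVec]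
    module
  refine LinearMap.ext fun M => ?_
  have hM := matrix_eq_sum_single M
  have step : Φ M = ∑ i, ∑ j, (((c v₀).re:ℝ):ℂ) • Matrix.single i j (M i j) := by
    conv_lhs => rw [hM]
    simp only [map_sum]
    refine Finset.sum_congr rfl fun i _ => Finset.sum_congr rfl fun j _ => ?_
    have hstd : Matrix.single i j (M i j) =
        (M i j) • vecMulVec (Pi.single i 1) (star (Pi.single j (1:ℂ))) := by
      rw [star_single_one, ← single_eq_single_vecMulVec_single,
        smul_single, smul_eq_mul, mul_one]
    rw [hstd, _root_.map_smul, hrank, smul_comm]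
  rw [step]
  simp only [← Finset.smul_sum]
  rw [← hM]
  simp

theorem adU_extremal {n : ℕ} (u : Mat n) (hu : u * star u = 1) (hu' : star u * u = 1)
    (Ψ : Mat n →ₗ[ℂ] Mat n) (hΨ : IsPosMap n Ψ) (hd : IsPosMap n (adL u - Ψ)) :
    ∃ l : ℝ, l ∈ Set.Icc (0 : ℝ) 1 ∧ Ψ = (l : ℂ) • adL u := by
  rcases Nat.eq_zero_or_pos n with rfl | hn
  · refine ⟨0, ⟨le_refl 0, zero_le_one⟩, ?_⟩
    refine LinearMap.ext fun M => ?_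
    ext i j
    exact i.elim0
  · set Φ : Mat n →ₗ[ℂ] Mat n := (adL (star u)).comp Ψ with hΦdef
    have hΦ : ∀ A : Mat n, A.PosSemidef → (Φ A).PosSemidef := by
      intro A hA
      have := (hΨ A hA).mul_mul_conjTranspose_same (star u)
      simpa [hΦdef, adL, Matrix.mul_assoc, Matrix.star_eq_conjTranspose] using this
    have hid : ∀ A : Mat n, A.PosSemidef → (A - Φ A).PosSemidef := by
      intro A hA
      have h1 := hd A hA
      have h2 := h1.mul_mul_conjTranspose_same (star u)
      have heq : star u * ((adL u - Ψ) A) * (star u)ᴴ = A - Φ A := by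
        simp only [LinearMap.sub_apply, hΦdef, LinearMap.comp_apply, adL,
          LinearMap.coe_mk, AddHom.coe_mk]
        rw [show (star u)ᴴ = u from by rw [← Matrix.star_eq_conjTranspose, star_star], star_star]
        rw [Matrix.mul_sub, Matrix.sub_mul]
        congr 1
        calc star u * (u * A * star u) * u
            = (star u * u) * A * (star u * u) := by simp only [Matrix.mul_assoc]
          _ = A := by rw [hu', Matrix.one_mul, Matrix.mul_one]
      rw [heq] at h2
      exact h2
    obtain ⟨l, hl, hΦeq⟩ := core hn Φ hΦ hid
    refine ⟨l, hl, ?_⟩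
    refine LinearMap.ext fun x => ?_
    have h1 : Φ x = (l:ℂ) • x := by rw [hΦeq]; rfl
    have h2 : u * Φ x * star u = Ψ x := by
      simp only [hΦdef, LinearMap.comp_apply, adL, LinearMap.coe_mk, AddHom.coe_mk]
      rw [star_star]
      calc u * (star u * Ψ x * u) * star u
          = (u * star u) * Ψ x * (u * star u) := by simp only [Matrix.mul_assoc]
        _ = Ψ x := by rw [hu, Matrix.one_mul, Matrix.mul_one]
    rw [← h2, h1]
    simp only [LinearMap.smul_apply, adL, LinearMap.coe_mk, AddHom.coe_mk]
    rw [Matrix.mul_smul, Matrix.smul_mul]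
end

section
/- Suppose Θ = Ad u is an automorphism of M_n(ℂ) (u unitary) and Θ = Ad a ∘ Φ + Ad b ∘ Ψ where {a,b} is a finite operational partition of unity and Φ, Ψ are unital completely positive maps on M_n(ℂ). Then there exist unitaries u_a, u_b in M_n(ℂ) and λ ∈ (0,1) such that a = √λ u_a, b = √(1−λ) u_b, Φ = Ad(u_a* u), and Ψ = Ad(u_b* u). -/
open Matrix ComplexOrder

/-- A PSD matrix dominated by a rank one matrix is a multiple of it. -/
lemma rankOne_dominates {N : Type*} [Fintype N] [DecidableEq N] (v : N → ℂ) (C : Matrix N N ℂ)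
    (hC : C.PosSemidef)
    (hD : ((Matrix.of fun p q => v p * star (v q)) - C).PosSemidef) :
    ∃ μ : ℝ, 0 ≤ μ ∧ ∀ p q, C p q = (μ : ℂ) * (v p * star (v q)) := by
  classical
  set R : Matrix N N ℂ := Matrix.of fun p q => v p * star (v q) with hR
  have hRmul : ∀ x : N → ℂ, R *ᵥ x = (star v ⬝ᵥ x) • v := by
    intro x
    funext p
    simp only [hR, mulVec, dotProduct, of_apply, Pi.smul_apply, smul_eq_mul, Pi.star_apply,
      Finset.sum_mul, Finset.mul_sum]
    exact Finset.sum_congr rfl fun q _ => by ring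
  have key : ∀ x : N → ℂ, star v ⬝ᵥ x = 0 → C *ᵥ x = 0 := by
    intro x hx
    rw [← hC.dotProduct_mulVec_zero_iff]
    have h1 : 0 ≤ star x ⬝ᵥ C *ᵥ x := hC.dotProduct_mulVec_nonneg x
    have h2 : 0 ≤ star x ⬝ᵥ (R - C) *ᵥ x := hD.dotProduct_mulVec_nonneg x
    rw [sub_mulVec, dotProduct_sub, hRmul, hx, zero_smul, dotProduct_zero] at h2
    have h3 : star x ⬝ᵥ C *ᵥ x ≤ 0 := by rwa [zero_sub, neg_nonneg] at h2
    exact le_antisymm h3 h1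
  by_cases hv : v = 0
  · refine ⟨0, le_refl 0, fun p q => ?_⟩
    have h0 : C *ᵥ Pi.single q 1 = 0 := key _ (by simp [hv])
    have := congrFun h0 p
    simp only [mulVec_single_one, col_apply, Pi.zero_apply] at this
    simp [this]
  · set s : ℂ := star v ⬝ᵥ v with hs
    have hs0 : s ≠ 0 := fun h => hv (dotProduct_star_self_eq_zero.mp h)
    have hsnn : 0 ≤ s := dotProduct_star_self_nonneg v
    obtain ⟨hsre, hsim⟩ := Complex.nonneg_iff.mp hsnn
    have hsval : s = ((s.re : ℝ) : ℂ) := Complex.ext rfl (by simp [← hsim])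
    set t : ℂ := star v ⬝ᵥ (C *ᵥ v) with ht
    have htnn : 0 ≤ t := hC.dotProduct_mulVec_nonneg v
    obtain ⟨htre, htim⟩ := Complex.nonneg_iff.mp htnn
    have htval : t = ((t.re : ℝ) : ℂ) := Complex.ext rfl (by simp [← htim])
    set α : ℂ := t / s with hα
    have hCv : C *ᵥ v = α • v := by
      set x₀ : N → ℂ := C *ᵥ v - α • v with hx₀
      have hvx₀ : star v ⬝ᵥ x₀ = 0 := by
        rw [hx₀, dotProduct_sub, dotProduct_smul, ← ht, ← hs, hα, smul_eq_mul,
          div_mul_cancel₀ _ hs0, sub_self]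
      have hCx₀ : C *ᵥ x₀ = 0 := key _ hvx₀
      have hx₀v : star x₀ ⬝ᵥ v = 0 := by
        rw [star_dotProduct, hvx₀, star_zero]
      have hzero : star x₀ ⬝ᵥ x₀ = 0 := by
        have h1 : star x₀ ⬝ᵥ x₀ = star x₀ ⬝ᵥ (C *ᵥ v) - α * (star x₀ ⬝ᵥ v) := by
          rw [hx₀]
          rw [dotProduct_sub, dotProduct_smul, smul_eq_mul]
        have h2 : star x₀ ⬝ᵥ (C *ᵥ v) = star (C *ᵥ x₀) ⬝ᵥ v := by
          rw [dotProduct_mulVec, star_mulVec, hC.1]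
        rw [h1, h2, hCx₀, hx₀v, mul_zero, sub_zero, star_zero, zero_dotProduct]
      have := dotProduct_star_self_eq_zero.mp hzero
      rw [hx₀, sub_eq_zero] at this
      exact this
    set μ : ℝ := t.re / s.re ^ 2 with hμ
    have hsrepos : 0 < s.re := by
      rcases lt_or_eq_of_le hsre with h | h
      · exact h
      · exact absurd (by rw [hsval, ← h]; simp) hs0
    refine ⟨μ, by positivity, fun p q => ?_⟩
    set β : ℂ := (star v ⬝ᵥ Pi.single q 1) / s with hβ
    have hx : star v ⬝ᵥ (Pi.single q 1 - β • v) = 0 := by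
      rw [dotProduct_sub, dotProduct_smul, smul_eq_mul, ← hs, hβ, div_mul_cancel₀ _ hs0, sub_self]
    have h0 := key _ hx
    rw [mulVec_sub, mulVec_smul, sub_eq_zero] at h0
    have hy : C *ᵥ Pi.single q 1 = (β * α) • v := by
      rw [h0, hCv, smul_smul]
    have hpq := congrFun hy p
    simp only [mulVec_single_one, col_apply, Pi.smul_apply, smul_eq_mul] at hpq
    have hβval : β = star (v q) / s := by
      rw [hβ, dotProduct_single, mul_one]
      rfl
    rw [hpq, hβval, hα, htval, hsval, hμ]
    push_cast
    field_simp

/-- Rank one matrices are PSD. -/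
lemma rankOne_psd {N : Type*} [Fintype N] [DecidableEq N] (w : N → ℂ) :
    (Matrix.of fun p q => w p * star (w q)).PosSemidef := by
  rw [posSemidef_iff_dotProduct_mulVec]
  constructor
  · ext p q
    simp [conjTranspose_apply, mul_comm]
  · intro x
    have hmv : (Matrix.of fun p q => w p * star (w q)) *ᵥ x = (star w ⬝ᵥ x) • w := by
      funext p
      simp only [mulVec, dotProduct, of_apply, Pi.smul_apply, smul_eq_mul, Pi.star_apply,
        Finset.sum_mul]
      exact Finset.sum_congr rfl fun q _ => by ring
    rw [hmv, dotProduct_smul, smul_eq_mul, star_dotProduct]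
    exact star_mul_self_nonneg _

/-- The Choi matrix of a linear map on `Mat n`. -/
noncomputable def choi {n : ℕ} (Φ : Mat n →ₗ[ℂ] Mat n) :
    Matrix (Fin n × Fin n) (Fin n × Fin n) ℂ :=
  Matrix.of fun p q => (Φ (Matrix.single p.2 q.2 1)) p.1 q.1

/-- The Choi matrix of a CP map is PSD. -/
lemma choi_psd {n : ℕ} (Φ : Mat n →ₗ[ℂ] Mat n) (hΦ : IsCompletelyPositive n Φ) :
    (choi Φ).PosSemidef := by
  set w : Fin n × Fin n → ℂ := fun p => if p.1 = p.2 then 1 else 0 with hw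
  have hE := rankOne_psd w
  have hinner : ∀ p q : Fin n × Fin n,
      (Matrix.of fun i j => (Matrix.of fun p' q' => w p' * star (w q')) (i, p.2) (j, q.2))
        = Matrix.single p.2 q.2 (1 : ℂ) := by
    intro p q
    ext i j
    simp only [of_apply, hw, Matrix.single]
    by_cases h1 : i = p.2 <;> by_cases h2 : j = q.2 <;> simp [h1, h2, eq_comm]
  have h2 := hΦ n _ hE
  simp only [hinner] at h2
  exact h2

lemma choi_conj {n : ℕ} (Φ : Mat n →ₗ[ℂ] Mat n) (c : Mat n) :
    choi ((adL c).comp Φ) =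
      (Matrix.of fun p q : Fin n × Fin n => if p.2 = q.2 then c p.1 q.1 else 0) * choi Φ *
      (Matrix.of fun p q : Fin n × Fin n => if p.2 = q.2 then c p.1 q.1 else 0)ᴴ := by
  ext p q
  simp only [choi, LinearMap.comp_apply, adL, LinearMap.coe_mk, AddHom.coe_mk, of_apply,
    mul_apply, conjTranspose_apply, star_eq_conjTranspose]
  rw [Fintype.sum_prod_type]
  simp only [of_apply, apply_ite, star_zero, mul_ite, mul_zero, ite_mul, zero_mul,
    Finset.sum_ite_eq, Finset.mem_univ, if_true]
  refine Finset.sum_congr rfl fun s₁ _ => ?_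
  congr 1
  rw [Fintype.sum_prod_type]
  simp only [Finset.sum_ite_eq, Finset.mem_univ, if_true]

/-- Two CP maps (given via PSD Choi matrices) summing to the identity are both scalar
multiples of the identity. -/
lemma cp_pair_sum_id {n : ℕ} (Φ' Ψ' : Mat n →ₗ[ℂ] Mat n)
    (hΦ : (choi Φ').PosSemidef) (hΨ : (choi Ψ').PosSemidef)
    (hsum : ∀ x : Mat n, Φ' x + Ψ' x = x) :
    ∃ μ : ℝ, 0 ≤ μ ∧ ∀ x : Mat n, Φ' x = (μ : ℂ) • x := by
  set w : Fin n × Fin n → ℂ := fun p => if p.1 = p.2 then 1 else 0 with hw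
  have hsub : (Matrix.of fun p q => w p * star (w q)) - choi Φ' = choi Ψ' := by
    ext p q
    simp only [Matrix.sub_apply, of_apply, choi]
    have h1 : Φ' (Matrix.single p.2 q.2 1) p.1 q.1 + Ψ' (Matrix.single p.2 q.2 1) p.1 q.1
        = Matrix.single p.2 q.2 (1 : ℂ) p.1 q.1 := by
      rw [← Matrix.add_apply, ← LinearMap.add_apply]
      rw [show (Φ' + Ψ') (Matrix.single p.2 q.2 1) = Matrix.single p.2 q.2 (1:ℂ) from by
        rw [LinearMap.add_apply]; exact hsum _]
    have h2 : Matrix.single p.2 q.2 (1 : ℂ) p.1 q.1 = w p * star (w q) := by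
      simp only [Matrix.single, of_apply, hw]
      rcases eq_or_ne p.1 p.2 with hp | hp
      · rcases eq_or_ne q.1 q.2 with hq | hq
        · rw [if_pos ⟨hp.symm, hq.symm⟩, if_pos hp, if_pos hq]; simp
        · rw [if_neg (fun hc => hq hc.2.symm), if_neg hq]; simp
      · rw [if_neg (fun hc => hp hc.1.symm), if_neg hp]; simp
    rw [← h2, ← h1]
    ring
  obtain ⟨μ, hμ0, hμ⟩ := rankOne_dominates w (choi Φ') hΦ (hsub ▸ hΨ)
  refine ⟨μ, hμ0, ?_⟩
  have hstd : ∀ k l : Fin n, Φ' (Matrix.single k l 1) = (μ : ℂ) • Matrix.single k l 1 := by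
    intro k l
    ext i j
    have h3 := hμ (i, k) (j, l)
    simp only [choi, of_apply] at h3
    rw [h3]
    simp only [Matrix.smul_apply, Matrix.single, of_apply, hw, smul_eq_mul]
    congr 1
    rcases eq_or_ne i k with h1 | h1
    · rcases eq_or_ne j l with h2 | h2
      · rw [if_pos h1, if_pos h2, if_pos ⟨h1.symm, h2.symm⟩]; simp
      · rw [if_neg h2, if_neg (fun hc : k = i ∧ l = j => h2 hc.2.symm)]; simp
    · rw [if_neg h1, if_neg (fun hc : k = i ∧ l = j => h1 hc.1.symm)]; simp
  intro x
  calc Φ' x = Φ' (∑ i, ∑ j, Matrix.single i j (x i j)) := by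
        rw [← matrix_eq_sum_single]
    _ = ∑ i, ∑ j, Φ' (Matrix.single i j (x i j)) := by simp only [map_sum]
    _ = ∑ i, ∑ j, (μ : ℂ) • Matrix.single i j (x i j) := by
        refine Finset.sum_congr rfl fun i _ => Finset.sum_congr rfl fun j _ => ?_
        have h3 : Matrix.single i j (x i j) = x i j • Matrix.single i j (1 : ℂ) := by simp
        rw [h3, LinearMap.map_smul, hstd, smul_comm]
    _ = (μ : ℂ) • x := by
        simp only [← Finset.smul_sum]
        rw [← matrix_eq_sum_single]

/-- Extraction of the unitary part. -/
lemma unitary_part {n : ℕ} (u c : Mat n) (hu : u * star u = 1) (hu' : star u * u = 1)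
    (Θ : Mat n →ₗ[ℂ] Mat n) (μ : ℝ) (hμpos : 0 < μ)
    (hcc : c * star c = ((μ : ℝ) : ℂ) • 1)
    (hid : ∀ x : Mat n, (star u * c) * Θ x * (star c * u) = ((μ : ℝ) : ℂ) • x) :
    ∃ uc : Mat n, uc * star uc = 1 ∧ star uc * uc = 1 ∧
      c = ((Real.sqrt μ : ℝ) : ℂ) • uc ∧
      ∀ x : Mat n, Θ x = (star uc * u) * x * star (star uc * u) := by
  set r := Real.sqrt μ with hrdef
  have hr : 0 < r := Real.sqrt_pos.mpr hμpos
  have hr2 : r * r = μ := Real.mul_self_sqrt hμpos.le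
  set uc : Mat n := ((r⁻¹ : ℝ) : ℂ) • c with hucdef
  have hstar_uc : star uc = ((r⁻¹ : ℝ) : ℂ) • star c := by
    rw [hucdef, star_smul]
    congr 1
    simp
  have hrC : ((r : ℝ) : ℂ) ≠ 0 := Complex.ofReal_ne_zero.mpr hr.ne'
  have hμr : ((μ : ℝ) : ℂ) = ((r : ℝ) : ℂ) * ((r : ℝ) : ℂ) := by
    rw [← hr2]; push_cast; ring
  have hscal : ((r⁻¹ : ℝ) : ℂ) * ((r⁻¹ : ℝ) : ℂ) * ((μ : ℝ) : ℂ) = 1 := by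
    rw [hμr]; push_cast; field_simp
  have huc1 : uc * star uc = 1 := by
    rw [hucdef, hstar_uc, smul_mul_assoc, mul_smul_comm, hcc, smul_smul, smul_smul,
      hscal, one_smul]
  have huc2 : star uc * uc = 1 := mul_eq_one_comm.mp huc1
  have hc_eq : c = ((r : ℝ) : ℂ) • uc := by
    rw [hucdef, smul_smul, show ((r : ℝ) : ℂ) * ((r⁻¹ : ℝ) : ℂ) = 1 from by
      push_cast; field_simp, one_smul]
  refine ⟨uc, huc1, huc2, hc_eq, fun x => ?_⟩
  have h2 : (star u * c) * Θ x * (star c * u)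
      = ((μ : ℝ) : ℂ) • ((star u * uc) * Θ x * (star uc * u)) := by
    rw [hc_eq]
    rw [show star (((r : ℝ) : ℂ) • uc) = ((r : ℝ) : ℂ) • star uc from by
      rw [star_smul]; congr 1; simp]
    simp only [mul_smul_comm, smul_mul_assoc, smul_smul]
    congr 1
    simp only [hμr]
    all_goals push_cast
    all_goals ring
  have hμC : ((μ : ℝ) : ℂ) ≠ 0 := Complex.ofReal_ne_zero.mpr hμpos.ne'
  have h3 : (star u * uc) * Θ x * (star uc * u) = x :=
    smul_right_injective (Mat n) hμC ((h2.symm.trans (hid x)))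
  have e2 : (star uc * u) * ((star u * uc) * Θ x * (star uc * u)) * (star u * uc) = Θ x := by
    have e : (star uc * u) * ((star u * uc) * Θ x * (star uc * u)) * (star u * uc)
        = (star uc * (u * star u) * uc) * Θ x * (star uc * (u * star u) * uc) := by
      simp only [Matrix.mul_assoc]
    rw [e, hu, mul_one, huc2, one_mul, mul_one]
  rw [← e2, h3, Matrix.star_mul, star_star]

theorem automorphism_decomposition {n : ℕ} (u a b : Mat n)
    (hu : u * star u = 1) (hu' : star u * u = 1)
    (ha0 : a ≠ 0) (hb0 : b ≠ 0) (hab : a * star a + b * star b = 1)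
    (Φ Ψ : Mat n →ₗ[ℂ] Mat n) (hΦ : IsUCP n Φ) (hΨ : IsUCP n Ψ)
    (h : ∀ x : Mat n, a * Φ x * star a + b * Ψ x * star b = u * x * star u) :
    ∃ (ua ub : Mat n) (l : ℝ), l ∈ Set.Ioo (0 : ℝ) 1 ∧
      ua * star ua = 1 ∧ star ua * ua = 1 ∧ ub * star ub = 1 ∧ star ub * ub = 1 ∧
      a = ((Real.sqrt l : ℝ) : ℂ) • ua ∧ b = ((Real.sqrt (1 - l) : ℝ) : ℂ) • ub ∧
      (∀ x : Mat n, Φ x = (star ua * u) * x * star (star ua * u)) ∧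
      (∀ x : Mat n, Ψ x = (star ub * u) * x * star (star ub * u)) := by
  rcases Nat.eq_zero_or_pos n with hn | hn
  · subst hn
    exact absurd (show a = 0 from by ext i j; exact i.elim0) ha0
  obtain ⟨hΦ1, hΦcp⟩ := hΦ
  obtain ⟨hΨ1, hΨcp⟩ := hΨ
  set Φ2 := (adL (star u * a)).comp Φ with hΦ2
  set Ψ2 := (adL (star u * b)).comp Ψ with hΨ2
  have hΦ2apply : ∀ x, Φ2 x = (star u * a) * Φ x * (star a * u) := by
    intro x
    simp [hΦ2, adL, Matrix.star_mul, star_star, Matrix.mul_assoc]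
  have hΨ2apply : ∀ x, Ψ2 x = (star u * b) * Ψ x * (star b * u) := by
    intro x
    simp [hΨ2, adL, Matrix.star_mul, star_star, Matrix.mul_assoc]
  have hCΦ2 : (choi Φ2).PosSemidef := by
    rw [hΦ2, choi_conj]
    exact (choi_psd Φ hΦcp).mul_mul_conjTranspose_same _
  have hCΨ2 : (choi Ψ2).PosSemidef := by
    rw [hΨ2, choi_conj]
    exact (choi_psd Ψ hΨcp).mul_mul_conjTranspose_same _
  have hsum2 : ∀ x : Mat n, Φ2 x + Ψ2 x = x := by
    intro x
    rw [hΦ2apply, hΨ2apply]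
    have e : (star u * a) * Φ x * (star a * u) + (star u * b) * Ψ x * (star b * u)
        = star u * ((a * Φ x * star a + b * Ψ x * star b) * u) := by
      simp only [Matrix.add_mul, Matrix.mul_add, Matrix.mul_assoc]
    rw [e, h x]
    rw [show (u * x * star u) * u = u * (x * (star u * u)) from by
      simp only [Matrix.mul_assoc], hu', mul_one, ← Matrix.mul_assoc, hu', one_mul]
  obtain ⟨μ, hμ0, hμ⟩ := cp_pair_sum_id Φ2 Ψ2 hCΦ2 hCΨ2 hsum2
  obtain ⟨ν, hν0, hν⟩ := cp_pair_sum_id Ψ2 Φ2 hCΨ2 hCΦ2 (fun x => by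
    rw [add_comm]; exact hsum2 x)
  have haa : a * star a = ((μ : ℝ) : ℂ) • 1 := by
    have h1 := hμ 1
    rw [hΦ2apply, hΦ1, mul_one] at h1
    have h2 : u * ((star u * a) * (star a * u)) * star u = a * star a := by
      have e : u * ((star u * a) * (star a * u)) * star u
          = (u * star u) * (a * (star a * (u * star u))) := by
        simp only [Matrix.mul_assoc]
      rw [e, hu, mul_one, one_mul]
    rw [← h2, h1]
    simp only [mul_smul_comm, smul_mul_assoc, mul_one, hu]
  have hbb : b * star b = ((ν : ℝ) : ℂ) • 1 := by
    have h1 := hν 1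
    rw [hΨ2apply, hΨ1, mul_one] at h1
    have h2 : u * ((star u * b) * (star b * u)) * star u = b * star b := by
      have e : u * ((star u * b) * (star b * u)) * star u
          = (u * star u) * (b * (star b * (u * star u))) := by
        simp only [Matrix.mul_assoc]
      rw [e, hu, mul_one, one_mul]
    rw [← h2, h1]
    simp only [mul_smul_comm, smul_mul_assoc, mul_one, hu]
  have hone : μ + ν = 1 := by
    have h3 : (((μ : ℝ) : ℂ) + ((ν : ℝ) : ℂ)) • (1 : Mat n) = 1 := by
      rw [add_smul, ← haa, ← hbb]
      exact hab
    set i0 : Fin n := ⟨0, hn⟩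
    have h4 : ((((μ : ℝ) : ℂ) + ((ν : ℝ) : ℂ)) • (1 : Mat n)) i0 i0 = (1 : Mat n) i0 i0 := by
      rw [h3]
    simp only [Matrix.smul_apply, one_apply_eq, smul_eq_mul, mul_one] at h4
    exact_mod_cast h4
  have hμpos : 0 < μ := by
    rcases lt_or_eq_of_le hμ0 with h' | h'
    · exact h'
    · exfalso
      apply ha0
      have hz : a * star a = 0 := by rw [haa, ← h', Complex.ofReal_zero, zero_smul]
      exact Matrix.self_mul_conjTranspose_eq_zero.mp (by rwa [← Matrix.star_eq_conjTranspose])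
  have hνpos : 0 < ν := by
    rcases lt_or_eq_of_le hν0 with h' | h'
    · exact h'
    · exfalso
      apply hb0
      have hz : b * star b = 0 := by rw [hbb, ← h', Complex.ofReal_zero, zero_smul]
      exact Matrix.self_mul_conjTranspose_eq_zero.mp (by rwa [← Matrix.star_eq_conjTranspose])
  obtain ⟨ua, hua1, hua2, ha_eq, hΦform⟩ := unitary_part u a hu hu' Φ μ hμpos haa
    (fun x => by rw [← hΦ2apply]; exact hμ x)
  obtain ⟨ub, hub1, hub2, hb_eq, hΨform⟩ := unitary_part u b hu hu' Ψ ν hνpos hbb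
    (fun x => by rw [← hΨ2apply]; exact hν x)
  refine ⟨ua, ub, μ, ⟨hμpos, by linarith⟩, hua1, hua2, hub1, hub2, ha_eq, ?_, hΦform, hΨform⟩
  rw [show (1 : ℝ) - μ = ν from by linarith]
  exact hb_eq
end

section
/- The set of unital completely positive maps on M_n(ℂ) equals the set of all operational convex combinations of automorphisms of M_n(ℂ): every ucp map Φ can be written as Φ(x) = ∑ a_i (u_i x u_i*) a_i* with unitaries u_i and {a_i} a finite operational partition of unity, and conversely every such map is ucp. -/
open Matrix ComplexOrder

lemma psd_sum {ι N : Type*} [Fintype ι] [Fintype N] (f : ι → Matrix N N ℂ)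
    (h : ∀ i, (f i).PosSemidef) : (∑ i, f i).PosSemidef := by
  classical
  exact Finset.sum_induction f _ (fun a b ha hb => ha.add hb) Matrix.PosSemidef.zero
    (fun i _ => h i)

lemma conj_block {n k : ℕ} (w : Mat n) (A : Matrix (Fin n × Fin k) (Fin n × Fin k) ℂ)
    (p q : Fin n × Fin k) :
    ((Matrix.of fun p q : Fin n × Fin k => w p.1 q.1 * (if p.2 = q.2 then (1:ℂ) else 0)) * A *
      (Matrix.of fun p q : Fin n × Fin k => w p.1 q.1 * (if p.2 = q.2 then (1:ℂ) else 0))ᴴ) p q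
    = (w * (Matrix.of fun i j => A (i, p.2) (j, q.2)) * wᴴ) p.1 q.1 := by
  simp only [Matrix.mul_apply, conjTranspose_apply, Matrix.of_apply, Fintype.sum_prod_type]
  simp [mul_ite, ite_mul, Finset.mul_sum, Finset.sum_mul, mul_comm, mul_left_comm, mul_assoc,
    apply_ite (starRingEnd ℂ), Finset.sum_ite_eq, Finset.sum_ite_eq']

/-- Kraus-form maps are completely positive. -/
lemma kraus_cp {n m : ℕ} (w : Fin m → Mat n) (Φ : Mat n →ₗ[ℂ] Mat n)
    (hrep : ∀ x : Mat n, Φ x = ∑ i, w i * x * star (w i)) :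
    IsCompletelyPositive n Φ := by
  intro k A hA
  have key : (Matrix.of fun p q : Fin n × Fin k =>
      (Φ (Matrix.of fun i j => A (i, p.2) (j, q.2))) p.1 q.1)
      = ∑ i, (Matrix.of fun p q : Fin n × Fin k =>
          (w i) p.1 q.1 * (if p.2 = q.2 then (1:ℂ) else 0)) * A *
        (Matrix.of fun p q : Fin n × Fin k =>
          (w i) p.1 q.1 * (if p.2 = q.2 then (1:ℂ) else 0))ᴴ := by
    ext p q
    rw [Matrix.sum_apply]
    simp only [Matrix.of_apply, hrep, Matrix.sum_apply]
    exact Finset.sum_congr rfl fun i _ => by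
      rw [conj_block (w i) A p q, Matrix.star_eq_conjTranspose]
  rw [key]
  exact psd_sum _ fun i => hA.mul_mul_conjTranspose_same _

/-- The Choi matrix of `Φ` is positive semidefinite when `Φ` is CP. -/
lemma choi_psd_s17 {n : ℕ} (Φ : Mat n →ₗ[ℂ] Mat n) (hCP : IsCompletelyPositive n Φ) :
    (Matrix.of fun p q : Fin n × Fin n =>
      (Φ (Matrix.single p.2 q.2 1)) p.1 q.1).PosSemidef := by
  classical
  set B : Matrix (Fin n × Fin n) (Fin 1) ℂ :=
    Matrix.of (fun p _ => if p.1 = p.2 then (1:ℂ) else 0) with hB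
  have hBpsd : (B * Bᴴ).PosSemidef := Matrix.posSemidef_self_mul_conjTranspose B
  have h := hCP n (B * Bᴴ) hBpsd
  have hEq : ∀ p q : Fin n × Fin n,
      (Matrix.of fun i j : Fin n => (B * Bᴴ) (i, p.2) (j, q.2)) =
        Matrix.single p.2 q.2 (1:ℂ) := by
    intro p q
    ext i j
    simp only [Matrix.of_apply, Matrix.mul_apply, conjTranspose_apply, hB,
      Fin.sum_univ_one, Matrix.single]
    by_cases h1 : i = p.2 <;> by_cases h2 : j = q.2 <;>
      simp [h1, h2, eq_comm]
  convert h using 2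
  ext p q
  rw [hEq p q]

section
open scoped MatrixOrder in
lemma psd_sqrt_exists {N : Type*} [Fintype N] [DecidableEq N] {C : Matrix N N ℂ}
    (hC : C.PosSemidef) : ∃ S : Matrix N N ℂ, S * S = C ∧ Sᴴ = S :=
  ⟨CFC.sqrt C, CFC.sqrt_mul_sqrt_self C hC.nonneg, (CFC.sqrt_nonneg C).posSemidef.1⟩
end

theorem ucp_eq_opConvexComb_of_automorphisms (n : ℕ) :
    {Φ : Mat n →ₗ[ℂ] Mat n | IsUCP n Φ} =
    {Φ : Mat n →ₗ[ℂ] Mat n | ∃ (m : ℕ) (a u : Fin m → Mat n), IsFOP a ∧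
      (∀ i, u i * star (u i) = 1 ∧ star (u i) * u i = 1) ∧
      ∀ x : Mat n, Φ x = ∑ i, a i * (u i * x * star (u i)) * star (a i)} := by
  classical
  ext Φ
  simp only [Set.mem_setOf_eq]
  constructor
  · rintro ⟨hU, hCP⟩
    -- Choi matrix and its square root
    have hC := choi_psd_s17 Φ hCP
    obtain ⟨S, hSS, hSH⟩ := psd_sqrt_exists hC
    have hC_eq : ∀ p q : Fin n × Fin n,
        (Φ (Matrix.single p.2 q.2 1)) p.1 q.1 = ∑ r, S p r * star (S q r) := by
      intro p q
      have h1 : S * S = Matrix.of fun p q : Fin n × Fin n =>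
          (Φ (Matrix.single p.2 q.2 1)) p.1 q.1 := hSS
      calc (Φ (Matrix.single p.2 q.2 1)) p.1 q.1 = (S * S) p q := by rw [h1]; rfl
        _ = ∑ r, S p r * star (S q r) := by
            rw [Matrix.mul_apply]
            refine Finset.sum_congr rfl fun r _ => ?_
            congr 1
            rw [← conjTranspose_apply, hSH]
    -- Kraus operators
    set V : Fin n × Fin n → Mat n := fun r => Matrix.of fun c a => S (c, a) r with hV
    have key : ∀ x : Mat n, Φ x = ∑ r, V r * x * star (V r) := by
      have hbasis : ∀ a b : Fin n, Φ (Matrix.single a b 1) =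
          ∑ r, V r * Matrix.single a b 1 * star (V r) := by
        intro a b
        ext c d
        rw [Matrix.sum_apply]
        have : ∀ r, ((V r * Matrix.single a b (1:ℂ) * star (V r) : Mat n)) c d
            = S (c, a) r * star (S (d, b) r) := by
          intro r
          simp only [Matrix.star_eq_conjTranspose, Matrix.mul_apply, conjTranspose_apply,
            Matrix.single, Matrix.of_apply, hV]
          simp [ite_and, ite_mul, mul_ite, Finset.sum_ite_eq, Finset.sum_ite_eq', eq_comm]
        rw [Finset.sum_congr rfl fun r _ => this r]
        exact hC_eq (c, a) (d, b)
      intro x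
      have hx : x = ∑ a : Fin n, ∑ b : Fin n, (x a b) • Matrix.single a b (1:ℂ) := by
        conv_lhs => rw [Matrix.matrix_eq_sum_single x]
        simp [Matrix.smul_single]
      calc Φ x = ∑ a, ∑ b, x a b • Φ (Matrix.single a b 1) := by
            conv_lhs => rw [hx]
            rw [map_sum]
            refine Finset.sum_congr rfl fun a _ => ?_
            rw [map_sum]
            exact Finset.sum_congr rfl fun b _ => Φ.map_smul _ _
        _ = ∑ a, ∑ b, ∑ r, x a b • (V r * Matrix.single a b 1 * star (V r)) := by
            refine Finset.sum_congr rfl fun a _ => Finset.sum_congr rfl fun b _ => ?_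
            rw [hbasis a b, Finset.smul_sum]
        _ = ∑ a, ∑ r : Fin n × Fin n, ∑ b, x a b • (V r * Matrix.single a b 1 * star (V r)) :=
            Finset.sum_congr rfl fun a _ => Finset.sum_comm
        _ = ∑ r, ∑ a, ∑ b, x a b • (V r * Matrix.single a b 1 * star (V r)) :=
            Finset.sum_comm
        _ = ∑ r, V r * x * star (V r) := by
            refine Finset.sum_congr rfl fun r _ => ?_
            conv_rhs => rw [hx]
            simp only [Finset.mul_sum, Finset.sum_mul, Matrix.mul_smul, Matrix.smul_mul]
    have hunit : ∑ r, V r * star (V r) = 1 := by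
      have := key 1
      rw [hU] at this
      simpa using this.symm
    -- filter out zeros
    set s : Finset (Fin n × Fin n) := Finset.univ.filter (fun r => V r ≠ 0) with hs
    set m := s.card with hm
    set e : Fin m ≃ {x // x ∈ s} := s.equivFin.symm with he
    have hsum : ∀ g : (Fin n × Fin n) → Mat n, (∀ r, V r = 0 → g r = 0) →
        ∑ i : Fin m, g (e i) = ∑ r, g r := by
      intro g hg
      rw [Equiv.sum_comp e (fun z => g z.1), Finset.sum_coe_sort s g, hs]
      exact Finset.sum_filter_of_ne fun r _ h => fun h0 => h (hg r h0)
    refine ⟨m, fun i => V (e i), fun _ => 1, ⟨fun i => ?_, ?_⟩, fun i => by simp, fun x => ?_⟩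
    · exact (Finset.mem_filter.mp ((e i).2)).2
    · rw [hsum (fun r => V r * star (V r)) (fun r h0 => by simp [h0])]
      exact hunit
    · rw [key x, ← hsum (fun r => V r * x * star (V r)) (fun r h0 => by simp [h0])]
      simp
  · rintro ⟨m, a, u, ⟨_, hsum1⟩, hu, hrep⟩
    have hrep' : ∀ x : Mat n, Φ x = ∑ i, (a i * u i) * x * star (a i * u i) := by
      intro x
      rw [hrep x]
      exact Finset.sum_congr rfl fun i _ => by
        simp only [Matrix.star_mul, Matrix.mul_assoc]
    constructor
    · rw [hrep 1]
      calc ∑ i, a i * (u i * 1 * star (u i)) * star (a i)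
          = ∑ i, a i * star (a i) := Finset.sum_congr rfl fun i _ => by
            rw [mul_one, (hu i).1, mul_one]
        _ = 1 := hsum1
    · exact kraus_cp (fun i => a i * u i) Φ hrep'
end
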